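/- For all integers 1 ≤ m ≤ n with m + n ≥ 3, the complete bipartite graph K_{m,n} satisfies χ_md(K_{m,n}) = 2. -/
import Mathlib


open SimpleGraph

/-- A majority dominator coloring: a proper coloring such that every vertex `v`
dominates at least half of some (nonempty) color class, i.e. there is a color class `C`
with `|C| ≤ 2 * |C ∩ N[v]|`. -/
def SimpleGraph.IsMajorityDominatorColoring {V : Type*} (G : SimpleGraph V) {k : ℕ}
    (c : V → Fin k) : Prop :=
  (∀ u v, G.Adj u v → c u ≠ c v) ∧
  ∀ v : V, ∃ i : Fin k,
    {u | c u = i}.Nonempty ∧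
    {u | c u = i}.ncard ≤ 2 * {u | c u = i ∧ (u = v ∨ G.Adj v u)}.ncard

/-- The majority dominator chromatic number. -/
noncomputable def SimpleGraph.majorityDominatorChromaticNumber {V : Type*}
    (G : SimpleGraph V) : ℕ :=
  sInf {k | ∃ c : V → Fin k, G.IsMajorityDominatorColoring c}

theorem md_completeBipartite (m n : ℕ) (hm : 1 ≤ m) (hmn : m ≤ n) (h3 : 3 ≤ m + n) :
    (completeBipartiteGraph (Fin m) (Fin n)).majorityDominatorChromaticNumber = 2 := by
  have hn : 1 ≤ n := hm.trans hmn
  set G := completeBipartiteGraph (Fin m) (Fin n)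
  have hmem : 2 ∈ {k | ∃ c : Fin m ⊕ Fin n → Fin k, G.IsMajorityDominatorColoring c} := by
    refine ⟨Sum.elim (fun _ => 0) (fun _ => 1), ?_, ?_⟩
    · rintro (a | a) (b | b) hadj <;> simp_all [G]
    · rintro (a | a)
      · refine ⟨1, ⟨Sum.inr ⟨0, hn⟩, by simp⟩, ?_⟩
        have hset : {u : Fin m ⊕ Fin n | Sum.elim (fun _ => (0 : Fin 2)) (fun _ => 1) u = 1}
            = {u | Sum.elim (fun _ => (0 : Fin 2)) (fun _ => 1) u = 1 ∧
                (u = Sum.inl a ∨ G.Adj (Sum.inl a) u)} := by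
          ext (u | u) <;> simp [G]
        rw [hset]
        omega
      · refine ⟨0, ⟨Sum.inl ⟨0, hm⟩, by simp⟩, ?_⟩
        have hset : {u : Fin m ⊕ Fin n | Sum.elim (fun _ => (0 : Fin 2)) (fun _ => 1) u = 0}
            = {u | Sum.elim (fun _ => (0 : Fin 2)) (fun _ => 1) u = 0 ∧
                (u = Sum.inr a ∨ G.Adj (Sum.inr a) u)} := by
          ext (u | u) <;> simp [G]
        rw [hset]
        omega
  refine le_antisymm (Nat.sInf_le hmem) (le_csInf ⟨2, hmem⟩ ?_)
  rintro k ⟨c, hproper, _⟩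
  by_contra hk
  interval_cases k
  · exact (c (Sum.inl ⟨0, hm⟩)).elim0
  · exact hproper (Sum.inl ⟨0, hm⟩) (Sum.inr ⟨0, hn⟩) (by simp [G]) (Subsingleton.elim _ _)
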